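/- (Word of mouth, stability of the trivial equilibrium) Let ε > 0, λ₂ > 0 and λ₁ = λ₃ = λ₄ = λ₅ = λ₇ = 0. The Jacobian matrix of the customer-dynamics model at the equilibrium (0, 0, γ(1−α)/ε, γα/ε), namely J = [[−ε−β₁, λ₂(1−α)γ/ε, 0, 0], [0, −ε−β₂+(λ₂+m_Rλ₆)γα/ε, 0, 0], [β₁, −λ₂(1−α)γ/ε, −ε, 0], [0, β₂−(λ₂+m_Rλ₆)γα/ε, 0, −ε]] (in the coordinate order (C, R, P_C, P_R)), has eigenvalues −ε, −β₁−ε and γα(λ₂+m_Rλ₆)/ε − (β₂+ε); in particular, if τ < 1 every eigenvalue of J has negative real part, and if τ > 1 then J has a positive real eigenvalue. -/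

import Mathlib

open Real Filter Topology

/-- The customer-dynamics model: `(C, R, PC, PR)` solves the system on `[t0, ∞)`. -/
def IsSolution (l1 l2 l3 l4 l5 l6 l7 b1 b2 eps gam m mR al t0 : ℝ)
    (C R PC PR : ℝ → ℝ) : Prop :=
  ∀ t : ℝ, t0 ≤ t →
    HasDerivAt C (l7 * R t - (eps + b1 + l5) * C t + (l1 + m * l4) * PC t
      + l2 * R t * PC t) t ∧
    HasDerivAt R (l5 * C t - (eps + b2 + l7) * R t + (l3 + m * l4) * PR t
      + (l2 + mR * l6) * R t * PR t) t ∧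
    HasDerivAt PC ((1 - al) * gam + b1 * C t + l7 * PR t - (eps + l5 + l1 + m * l4) * PC t
      - l2 * R t * PC t) t ∧
    HasDerivAt PR (al * gam + b2 * R t + l5 * PC t - (eps + l7 + l3 + m * l4) * PR t
      - (l2 + mR * l6) * R t * PR t) t

/-- An equilibrium of the customer-dynamics model: all four right-hand sides vanish. -/
def IsEquilibrium (l1 l2 l3 l4 l5 l6 l7 b1 b2 eps gam m mR al : ℝ)
    (C R PC PR : ℝ) : Prop :=
  l7 * R - (eps + b1 + l5) * C + (l1 + m * l4) * PC + l2 * R * PC = 0 ∧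
  l5 * C - (eps + b2 + l7) * R + (l3 + m * l4) * PR + (l2 + mR * l6) * R * PR = 0 ∧
  (1 - al) * gam + b1 * C + l7 * PR - (eps + l5 + l1 + m * l4) * PC - l2 * R * PC = 0 ∧
  al * gam + b2 * R + l5 * PC - (eps + l7 + l3 + m * l4) * PR - (l2 + mR * l6) * R * PR = 0

set_option maxHeartbeats 1000000 in
theorem det_fin_four' {S : Type*} [CommRing S] (A : Matrix (Fin 4) (Fin 4) S) :
    A.det =
      A 0 0 * A 1 1 * A 2 2 * A 3 3 - A 0 0 * A 1 1 * A 2 3 * A 3 2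
      - A 0 0 * A 1 2 * A 2 1 * A 3 3 + A 0 0 * A 1 2 * A 2 3 * A 3 1
      + A 0 0 * A 1 3 * A 2 1 * A 3 2 - A 0 0 * A 1 3 * A 2 2 * A 3 1
      - A 0 1 * A 1 0 * A 2 2 * A 3 3 + A 0 1 * A 1 0 * A 2 3 * A 3 2
      + A 0 1 * A 1 2 * A 2 0 * A 3 3 - A 0 1 * A 1 2 * A 2 3 * A 3 0
      - A 0 1 * A 1 3 * A 2 0 * A 3 2 + A 0 1 * A 1 3 * A 2 2 * A 3 0
      + A 0 2 * A 1 0 * A 2 1 * A 3 3 - A 0 2 * A 1 0 * A 2 3 * A 3 1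
      - A 0 2 * A 1 1 * A 2 0 * A 3 3 + A 0 2 * A 1 1 * A 2 3 * A 3 0
      + A 0 2 * A 1 3 * A 2 0 * A 3 1 - A 0 2 * A 1 3 * A 2 1 * A 3 0
      - A 0 3 * A 1 0 * A 2 1 * A 3 2 + A 0 3 * A 1 0 * A 2 2 * A 3 1
      + A 0 3 * A 1 1 * A 2 0 * A 3 2 - A 0 3 * A 1 1 * A 2 2 * A 3 0
      - A 0 3 * A 1 2 * A 2 0 * A 3 1 + A 0 3 * A 1 2 * A 2 1 * A 3 0 := by
  rw [Matrix.det_succ_row_zero]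
  simp [Fin.sum_univ_succ, Matrix.det_fin_three, Matrix.submatrix_apply, Fin.succAbove]
  ring

set_option maxHeartbeats 1000000 in
theorem word_of_mouth_trivial_equilibrium_stability (l1 l2 l3 l4 l5 l6 l7 b1 b2 eps gam m mR al : ℝ) (tau : ℝ)
    (J : Matrix (Fin 4) (Fin 4) ℂ)
    (hl1 : 0 ≤ l1) (hl2 : 0 ≤ l2) (hl3 : 0 ≤ l3) (hl4 : 0 ≤ l4) (hl5 : 0 ≤ l5)
    (hl6 : 0 ≤ l6) (hl7 : 0 ≤ l7) (hb1 : 0 ≤ b1) (hb2 : 0 ≤ b2) (heps0 : 0 ≤ eps)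
    (hgam : 0 ≤ gam) (hm : 0 ≤ m) (hmR : 0 ≤ mR) (hal0 : 0 ≤ al) (hal1 : al ≤ 1)
    (heps : 0 < eps) (hl2pos : 0 < l2)
    (hl1 : l1 = 0) (hl3 : l3 = 0) (hl4 : l4 = 0) (hl5 : l5 = 0) (hl7 : l7 = 0)
    (htau : tau = al * gam * (l2 + mR * l6) / (eps * (eps + b2)))
    (hJ : J = !![((-eps - b1 : ℝ) : ℂ), ((l2 * ((1 - al) * gam / eps) : ℝ) : ℂ), 0, 0;
      0, ((-eps - b2 + (l2 + mR * l6) * (gam * al / eps) : ℝ) : ℂ), 0, 0;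
      ((b1 : ℝ) : ℂ), ((-(l2 * ((1 - al) * gam / eps)) : ℝ) : ℂ), ((-eps : ℝ) : ℂ), 0;
      0, ((b2 - (l2 + mR * l6) * (gam * al / eps) : ℝ) : ℂ), 0, ((-eps : ℝ) : ℂ)]) :
    spectrum ℂ J = {((-eps : ℝ) : ℂ), ((-b1 - eps : ℝ) : ℂ),
      ((gam * al * (l2 + mR * l6) / eps - (b2 + eps) : ℝ) : ℂ)} ∧
    (tau < 1 → ∀ μ ∈ spectrum ℂ J, μ.re < 0) ∧
    (tau > 1 → ∃ r : ℝ, 0 < r ∧ (r : ℂ) ∈ spectrum ℂ J) := by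
  have hepsC : (eps : ℂ) ≠ 0 := by exact_mod_cast heps.ne'
  have hmem : ∀ μ : ℂ, μ ∈ spectrum ℂ J ↔
      (μ + eps + b1) * (μ + eps + b2 - ((l2 + mR * l6) * (gam * al / eps) : ℝ)) * (μ + eps)^2
        = 0 := by
    intro μ
    rw [spectrum.mem_iff, Matrix.isUnit_iff_isUnit_det, isUnit_iff_ne_zero, not_ne_iff]
    have hdet : (algebraMap ℂ (Matrix (Fin 4) (Fin 4) ℂ) μ - J).det
        = (μ + eps + b1) * (μ + eps + b2 - ((l2 + mR * l6) * (gam * al / eps) : ℝ))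
          * (μ + eps)^2 := by
      subst hJ
      rw [det_fin_four']
      simp [Matrix.algebraMap_matrix_apply]
      push_cast
      ring
    rw [hdet]
  have hspec : spectrum ℂ J = {((-eps : ℝ) : ℂ), ((-b1 - eps : ℝ) : ℂ),
      ((gam * al * (l2 + mR * l6) / eps - (b2 + eps) : ℝ) : ℂ)} := by
    ext μ
    rw [hmem]
    simp only [Set.mem_insert_iff, Set.mem_singleton_iff]
    rw [mul_eq_zero, mul_eq_zero, pow_eq_zero_iff (two_ne_zero)]
    constructor
    · rintro ((h | h) | h)
      · right; left
        push_cast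
        linear_combination h
      · right; right
        push_cast at h ⊢
        field_simp at h ⊢
        linear_combination h
      · left
        push_cast
        linear_combination h
    · rintro (h | h | h)
      · right
        rw [h]; push_cast; ring
      · left; left
        rw [h]; push_cast; ring
      · left; right
        rw [h]
        push_cast
        field_simp
        ring
  refine ⟨hspec, ?_, ?_⟩
  · intro ht μ hμ
    rw [hspec] at hμ
    have hden : 0 < eps * (eps + b2) := by positivity
    have hlt : al * gam * (l2 + mR * l6) < eps * (eps + b2) := by
      rw [htau, div_lt_one hden] at ht; exact ht
    simp only [Set.mem_insert_iff, Set.mem_singleton_iff] at hμ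
    rcases hμ with h | h | h <;> rw [h] <;> simp only [Complex.ofReal_re]
    · linarith
    · linarith
    · rw [sub_neg, div_lt_iff₀ heps]
      nlinarith
  · intro ht
    refine ⟨gam * al * (l2 + mR * l6) / eps - (b2 + eps), ?_, ?_⟩
    · have hden : 0 < eps * (eps + b2) := by positivity
      have hlt : eps * (eps + b2) < al * gam * (l2 + mR * l6) := by
        rw [htau, gt_iff_lt, one_lt_div hden] at ht; exact ht
      rw [sub_pos, lt_div_iff₀ heps]
      nlinarith
    · rw [hspec]
      simp
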